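/- Every permutation σ ∈ S_n whose descent composition has the form (n−k, 1^k) for some k ≥ 1 (i.e., σ is increasing then strictly decreasing with decreasing part of length k ≥ 1) is not a linear extension of any canonically-labelled plane tree with n nodes; consequently the only permutation of shape (n) that is a linear extension of every tree is the identity. -/

import Mathlib

/-- Plane trees: a node with an ordered (possibly empty) list of subtrees. -/
inductive PlaneTree : Type
  | node : List PlaneTree → PlaneTree

namespace PlaneTree

mutual
  /-- Number of nodes of a plane tree. -/
  def sizeT : PlaneTree → ℕ
    | .node ts => 1 + sizeF ts
  /-- Number of nodes of a plane forest. -/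
  def sizeF : List PlaneTree → ℕ
    | [] => 0
    | t :: ts => sizeT t + sizeF ts
end

/-- `PosT t p` : `p` (a path of child indices) is the position of a node of the tree `t`. -/
inductive PosT : PlaneTree → List ℕ → Prop
  | root (ts : List PlaneTree) : PosT (.node ts) []
  | child {ts : List PlaneTree} {t : PlaneTree} {i : ℕ} {q : List ℕ} :
      ts[i]? = some t → PosT t q → PosT (.node ts) (i :: q)

/-- Positions of the nodes of a forest: a tree index followed by a path in that tree.
A position `q` that strictly extends `p` is a (strict) descendant of `p`; in the
forest poset (roots maximal) this means `q <_F p`. -/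
def PosF (F : List PlaneTree) : List ℕ → Prop
  | [] => False
  | i :: q => ∃ t, F[i]? = some t ∧ PosT t q

/-- Comparison of positions in postorder: `postLt p q` holds iff the node at position `p`
comes strictly before the node at position `q` in the postorder traversal, i.e. the
canonical (postorder) label of `p` is smaller than that of `q`. -/
def postLt : List ℕ → List ℕ → Prop
  | [], _ => False
  | _ :: _, [] => True
  | a :: p, b :: q => a < b ∨ (a = b ∧ postLt p q)

/-- A linear extension of the forest `F` (canonically labelled, roots maximal),
presented as the list of positions of the nodes in the order they are visited:
it lists every node exactly once, and no node appears before one of its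
(strict) descendants, i.e. an earlier position is never a strict prefix of a later one. -/
def IsLinExt (F : List PlaneTree) (L : List (List ℕ)) : Prop :=
  L.Nodup ∧ (∀ p, p ∈ L ↔ PosF F p) ∧
  L.Pairwise (fun p q => ¬(p <+: q ∧ p ≠ q))

/-! ### Auxiliary lemmas -/

theorem getD_eq_get_aux {α : Type*} (l : List α) (d : α) {n : ℕ} (hn : n < l.length) :
    l.getD n d = l.get ⟨n, hn⟩ := by
  simp [List.getElem?_eq_getElem hn]

theorem postLt_nil (q : List ℕ) : ¬ postLt [] q := id

theorem postLt_cons_nil (a : ℕ) (p : List ℕ) : postLt (a :: p) [] := trivial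

theorem postLt_cons_cons {a b : ℕ} {p q : List ℕ} :
    postLt (a :: p) (b :: q) ↔ a < b ∨ (a = b ∧ postLt p q) := Iff.rfl

theorem postLt_trans : ∀ {p q r : List ℕ}, postLt p q → postLt q r → postLt p r
  | [], _, _, h, _ => absurd h (postLt_nil _)
  | _ :: _, [], _, _, h => absurd h (postLt_nil _)
  | _ :: _, _ :: _, [], _, _ => trivial
  | a :: p, b :: q, c :: r, h1, h2 => by
      rcases h1 with h1 | ⟨rfl, h1⟩ <;> rcases h2 with h2 | ⟨rfl, h2⟩
      · exact Or.inl (h1.trans h2)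
      · exact Or.inl h1
      · exact Or.inl h2
      · exact Or.inr ⟨rfl, postLt_trans h1 h2⟩

theorem postLt_irrefl : ∀ p : List ℕ, ¬ postLt p p
  | [] => id
  | a :: p => by
      rintro (h | ⟨-, h⟩)
      · exact absurd h (lt_irrefl a)
      · exact postLt_irrefl p h

theorem postLt_asymm {p q : List ℕ} (h : postLt p q) : ¬ postLt q p :=
  fun h' => postLt_irrefl p (postLt_trans h h')

theorem postLt_total : ∀ p q : List ℕ, p ≠ q → postLt p q ∨ postLt q p
  | [], [], h => absurd rfl h
  | [], _ :: _, _ => Or.inr trivial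
  | _ :: _, [], _ => Or.inl trivial
  | a :: p, b :: q, h => by
      rcases Nat.lt_trichotomy a b with hab | rfl | hab
      · exact Or.inl (Or.inl hab)
      · rcases postLt_total p q (fun hpq => h (by rw [hpq])) with h' | h'
        · exact Or.inl (Or.inr ⟨rfl, h'⟩)
        · exact Or.inr (Or.inr ⟨rfl, h'⟩)
      · exact Or.inr (Or.inl hab)

instance : IsTrans (List ℕ) postLt := ⟨fun _ _ _ => postLt_trans⟩
instance : IsAntisymm (List ℕ) postLt := ⟨fun _ _ h h' => absurd h (postLt_asymm h')⟩
instance : IsIrrefl (List ℕ) postLt := ⟨postLt_irrefl⟩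

theorem postLt_append : ∀ (p r : List ℕ), r ≠ [] → postLt (p ++ r) p
  | [], [], h => absurd rfl h
  | [], _ :: _, _ => trivial
  | a :: p, r, h => Or.inr ⟨rfl, postLt_append p r h⟩

theorem postLt_of_prefix {p q : List ℕ} (h : p <+: q) (hne : p ≠ q) : postLt q p := by
  obtain ⟨r, rfl⟩ := h
  cases r with
  | nil => simp at hne
  | cons b r => exact postLt_append p (b :: r) (by simp)

mutual
  /-- Postorder list of the positions of a tree. -/
  def posListT : PlaneTree → List (List ℕ)
    | .node ts => posListF 0 ts ++ [[]]
  /-- Postorder list of the positions of a forest, with indices shifted by `i`. -/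
  def posListF : ℕ → List PlaneTree → List (List ℕ)
    | _, [] => []
    | i, t :: ts => (posListT t).map (i :: ·) ++ posListF (i + 1) ts
end

mutual
theorem mem_posListT : ∀ (t : PlaneTree) (p : List ℕ), p ∈ posListT t ↔ PosT t p
  | .node ts, p => by
      rw [posListT]
      simp only [List.mem_append, List.mem_singleton]
      constructor
      · rintro (h | rfl)
        · obtain ⟨j, q, t, hj, hq, rfl⟩ := (mem_posListF 0 ts p).1 h
          have : (0 + j) = j := by omega
          rw [this]
          exact PosT.child hj hq
        · exact PosT.root ts
      · rintro (_ | ⟨hj, hq⟩)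
        · exact Or.inr rfl
        · exact Or.inl ((mem_posListF 0 ts _).2 ⟨_, _, _, hj, hq, by rw [Nat.zero_add]⟩)
theorem mem_posListF : ∀ (i : ℕ) (F : List PlaneTree) (p : List ℕ),
    p ∈ posListF i F ↔ ∃ j q t, F[j]? = some t ∧ PosT t q ∧ p = (i + j) :: q
  | i, [], p => by simp [posListF]
  | i, t :: ts, p => by
      rw [posListF]
      simp only [List.mem_append, List.mem_map]
      constructor
      · rintro (⟨q, hq, rfl⟩ | h)
        · exact ⟨0, q, t, rfl, (mem_posListT t q).1 hq, by rw [Nat.add_zero]⟩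
        · obtain ⟨j, q, u, hj, hq, rfl⟩ := (mem_posListF (i + 1) ts p).1 h
          exact ⟨j + 1, q, u, hj, hq, by congr 1; omega⟩
      · rintro ⟨j, q, u, hj, hq, rfl⟩
        cases j with
        | zero =>
            obtain rfl : t = u := by simpa using hj
            exact Or.inl ⟨q, (mem_posListT _ q).2 hq, by rw [Nat.add_zero]⟩
        | succ j =>
            refine Or.inr ((mem_posListF (i + 1) ts _).2 ⟨j, q, u, by simpa using hj, hq, ?_⟩)
            congr 1; omega
end

theorem head_ge_of_mem_posListF {i : ℕ} {F : List PlaneTree} {p : List ℕ}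
    (h : p ∈ posListF i F) : ∃ a q, p = a :: q ∧ i ≤ a := by
  obtain ⟨j, q, t, -, -, rfl⟩ := (mem_posListF i F p).1 h
  exact ⟨i + j, q, rfl, Nat.le_add_right i j⟩

mutual
theorem sorted_posListT : ∀ t : PlaneTree, (posListT t).Pairwise postLt
  | .node ts => by
      rw [posListT]
      refine (List.pairwise_append).2 ⟨sorted_posListF 0 ts, List.pairwise_singleton _ _, ?_⟩
      intro p hp b hb
      obtain ⟨a, q, rfl, -⟩ := head_ge_of_mem_posListF hp
      simp only [List.mem_singleton] at hb
      subst hb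
      trivial
theorem sorted_posListF : ∀ (i : ℕ) (F : List PlaneTree), (posListF i F).Pairwise postLt
  | _, [] => List.Pairwise.nil
  | i, t :: ts => by
      rw [posListF]
      refine (List.pairwise_append).2 ⟨?_, sorted_posListF (i + 1) ts, ?_⟩
      · exact (List.pairwise_map).2 ((sorted_posListT t).imp (fun h => Or.inr ⟨rfl, h⟩))
      · rintro p hp r hr
        obtain ⟨q, -, rfl⟩ := List.mem_map.1 hp
        obtain ⟨a, q', rfl, ha⟩ := head_ge_of_mem_posListF hr
        exact Or.inl (by omega)
end

mutual
theorem length_posListT : ∀ t : PlaneTree, (posListT t).length = sizeT t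
  | .node ts => by
      rw [posListT, sizeT, List.length_append, length_posListF 0 ts]
      simp [Nat.add_comm]
theorem length_posListF : ∀ (i : ℕ) (F : List PlaneTree), (posListF i F).length = sizeF F
  | _, [] => rfl
  | i, t :: ts => by
      rw [posListF, sizeF, List.length_append, List.length_map,
        length_posListT t, length_posListF (i + 1) ts]
end

/-- The canonical (postorder, i.e. identity) linear extension of the forest `[T]`. -/
def canonL (T : PlaneTree) : List (List ℕ) := (posListT T).map (0 :: ·)

theorem PosF_singleton {T : PlaneTree} {p : List ℕ} :
    PosF [T] p ↔ ∃ q, p = 0 :: q ∧ PosT T q := by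
  cases p with
  | nil => exact iff_of_false id (by rintro ⟨q, h, -⟩; cases h)
  | cons i q =>
    constructor
    · rintro ⟨t, ht, hq⟩
      cases i with
      | zero =>
          obtain rfl : T = t := by simpa using ht
          exact ⟨q, rfl, hq⟩
      | succ i => simp at ht
    · rintro ⟨q', he, hq⟩
      cases he
      exact ⟨T, rfl, hq⟩

theorem mem_canonL {T : PlaneTree} {p : List ℕ} : p ∈ canonL T ↔ PosF [T] p := by
  rw [PosF_singleton]
  simp only [canonL, List.mem_map]
  constructor
  · rintro ⟨q, hq, rfl⟩
    exact ⟨q, rfl, (mem_posListT T q).1 hq⟩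
  · rintro ⟨q, rfl, hq⟩
    exact ⟨q, (mem_posListT T q).2 hq, rfl⟩

theorem sorted_canonL {T : PlaneTree} : (canonL T).Pairwise postLt :=
  (List.pairwise_map).2 ((sorted_posListT T).imp (fun h => Or.inr ⟨rfl, h⟩))

theorem length_canonL {T : PlaneTree} : (canonL T).length = sizeT T := by
  rw [canonL, List.length_map, length_posListT]

theorem isLinExt_of_sorted {F : List PlaneTree} {L : List (List ℕ)}
    (hs : L.Pairwise postLt) (hm : ∀ p, p ∈ L ↔ PosF F p) : IsLinExt F L := by
  refine ⟨hs.nodup, hm, hs.imp ?_⟩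
  intro a b h hc
  exact postLt_asymm h (postLt_of_prefix hc.1 hc.2)

theorem linExt_perm {T : PlaneTree} {L : List (List ℕ)} (h : IsLinExt [T] L) :
    L.Perm (canonL T) :=
  (List.perm_ext_iff_of_nodup h.1 sorted_canonL.nodup).2
    fun p => (h.2.1 p).trans mem_canonL.symm

theorem linExt_length {T : PlaneTree} {L : List (List ℕ)} (h : IsLinExt [T] L) :
    L.length = sizeT T := by
  rw [(linExt_perm h).length_eq, length_canonL]

theorem sorted_of_noDescent {T : PlaneTree} {L : List (List ℕ)} (h : IsLinExt [T] L)
    (hnd : ∀ j ∈ Finset.Icc 1 (sizeT T - 1), ¬ postLt (L.getD j []) (L.getD (j - 1) [])) :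
    L.Pairwise postLt := by
  have hlen := linExt_length h
  rw [← List.isChain_iff_pairwise, List.isChain_iff_getElem]
  intro i hi
  have h1 : i + 1 < L.length := by omega
  have h0 : i < L.length := by omega
  have hj : i + 1 ∈ Finset.Icc 1 (sizeT T - 1) := by
    simp only [Finset.mem_Icc]; omega
  have hthis := hnd (i + 1) hj
  rw [Nat.add_sub_cancel, getD_eq_get_aux _ _ h1, getD_eq_get_aux _ _ h0] at hthis
  have hne : L.get ⟨i, by omega⟩ ≠ L.get ⟨i + 1, by omega⟩ := by
    intro he
    have := (h.1.get_inj_iff).1 he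
    simp only [Fin.mk.injEq] at this
    omega
  rcases postLt_total _ _ hne with h' | h'
  · exact h'
  · exact absurd h' hthis

/-- No permutation of descent composition `(n-k, 1^k)` with `k ≥ 1` (increasing then
strictly decreasing, with decreasing part of length `k ≥ 1`, i.e. descents exactly at
positions `n-k, …, n-1`) is a linear extension of a canonically-labelled plane tree with
`n` nodes; and every tree has exactly one linear extension with no descent (the identity,
the common linear extension of all trees). -/
theorem hook_shape_not_linear_extension (n k : ℕ) (hk : 1 ≤ k) (hkn : k ≤ n - 1)
    (T : PlaneTree) (hT : sizeT T = n) :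
    (∀ L : List (List ℕ), IsLinExt [T] L →
      ¬ (∀ j ∈ Finset.Icc 1 (n - 1),
          (postLt (L.getD j []) (L.getD (j - 1) []) ↔ n - k ≤ j))) ∧
    (∃! L : List (List ℕ), IsLinExt [T] L ∧
      ∀ j ∈ Finset.Icc 1 (n - 1), ¬ postLt (L.getD j []) (L.getD (j - 1) [])) := by
  subst hT
  obtain ⟨ts⟩ := T
  set T := PlaneTree.node ts with hTdef
  have hn2 : 2 ≤ sizeT T := by omega
  constructor
  · rintro L hL hdes
    have hlen : L.length = sizeT T := linExt_length hL
    have hroot : [0] ∈ L := (hL.2.1 [0]).2 (PosF_singleton.2 ⟨[], rfl, PosT.root ts⟩)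
    obtain ⟨⟨m, hmlt⟩, hm⟩ := List.mem_iff_get.1 hroot
    by_cases hcase : m + 1 < L.length
    · -- the root appears before some other position, which it is a prefix of
      have hpair := List.pairwise_iff_get.1 hL.2.2 ⟨m, hmlt⟩ ⟨m + 1, hcase⟩
        (by simp [Fin.lt_def])
      rw [hm] at hpair
      set q := L.get ⟨m + 1, hcase⟩ with hq
      have hqmem : q ∈ L := List.get_mem L ⟨m + 1, hcase⟩
      obtain ⟨q', hq', -⟩ := PosF_singleton.1 ((hL.2.1 q).1 hqmem)
      have hne : [0] ≠ q := by
        intro he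
        rw [← hm] at he
        have := (hL.1.get_inj_iff).1 he
        simp only [Fin.mk.injEq] at this
        omega
      exact hpair ⟨⟨q', by rw [hq']; rfl⟩, hne⟩
    · -- the root is the last element, but the last step is a descent
      have hmeq : m = sizeT T - 1 := by omega
      have hj := (hdes (sizeT T - 1) (by simp only [Finset.mem_Icc]; omega)).2 (by omega)
      rw [getD_eq_get_aux _ _ (show sizeT T - 1 < L.length by omega),
        getD_eq_get_aux _ _ (show sizeT T - 1 - 1 < L.length by omega)] at hj
      have hfirst : L.get ⟨sizeT T - 1, by omega⟩ = [0] := by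
        rw [← hm]; congr 1; simp only [Fin.mk.injEq]; omega
      rw [hfirst] at hj
      set u := L.get ⟨sizeT T - 1 - 1, by omega⟩ with hu
      obtain ⟨u', hu', -⟩ := PosF_singleton.1 ((hL.2.1 u).1 (List.get_mem L _))
      rw [hu'] at hj
      rcases hj with hj | ⟨-, hj⟩
      · omega
      · exact postLt_nil _ hj
  · refine ⟨canonL T, ⟨isLinExt_of_sorted sorted_canonL (fun p => mem_canonL), ?_⟩, ?_⟩
    · intro j hj
      simp only [Finset.mem_Icc] at hj
      have hlen : (canonL T).length = sizeT T := length_canonL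
      rw [getD_eq_get_aux _ _ (show j < (canonL T).length by omega),
        getD_eq_get_aux _ _ (show j - 1 < (canonL T).length by omega)]
      exact postLt_asymm (sorted_canonL.rel_get_of_lt (by simp only [Fin.lt_def]; omega))
    · rintro L ⟨hL, hnd⟩
      exact List.Perm.eq_of_pairwise' (sorted_of_noDescent hL hnd)
        sorted_canonL (linExt_perm hL)

end PlaneTree
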